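/- For a finite automaton ℳ with state set Q, transition function extended to words, define on the set C_ℳ of cycles (sets of states occurring infinitely often on some infinite run from the initial state) the relations: c ≤₀ d iff some state of d is reachable from some state of c, and c ≤₁ d iff c ⊇ d. Then (C_ℳ; ≤₀, ≤₁) is a compatible 2-preorder: ≤₀ and ≤₁ are preorders, c ≤₁ d implies c ≡₀ d, and c ≡₀ d implies there is e ∈ C_ℳ with e ≤₁ c and e ≤₁ d. -/

import Mathlib

/-- The run of an automaton `(Q, δ, init)` on an infinite word `ξ`. -/
def run {X Q : Type*} (δ : Q → X → Q) (init : Q) (ξ : ℕ → X) : ℕ → Q :=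
  fun n => Nat.rec init (fun m q => δ q (ξ m)) n

/-- The set of states occurring infinitely often in the run on `ξ`. -/
def infOcc {X Q : Type*} (δ : Q → X → Q) (init : Q) (ξ : ℕ → X) : Set Q :=
  {q | ∀ N : ℕ, ∃ n : ℕ, N ≤ n ∧ run δ init ξ n = q}

/-- The set of cycles of the automaton. -/
def cycles {X Q : Type*} (δ : Q → X → Q) (init : Q) : Set (Set Q) :=
  {c | ∃ ξ : ℕ → X, infOcc δ init ξ = c}

/-- Reachability of state `r` from state `q`. -/
def reach {X Q : Type*} (δ : Q → X → Q) (q r : Q) : Prop :=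
  ∃ w : List X, w.foldl δ q = r

/-- `c ≤₀ d`: some state of `d` is reachable from some state of `c`. -/
def cle0 {X Q : Type*} (δ : Q → X → Q) (c d : Set Q) : Prop :=
  ∃ q ∈ c, ∃ r ∈ d, reach δ q r

/-- `c ≤₁ d` iff `c ⊇ d`. -/
def cle1 {Q : Type*} (c d : Set Q) : Prop := d ⊆ c

section Aux
variable {X Q : Type*}

def wApp (w : List X) (ξ : ℕ → X) : ℕ → X :=
  fun n => if n < w.length then w.getD n (ξ 0) else ξ (n - w.length)

def per (v : List X) (x : X) : ℕ → X := fun n => v.getD (n % v.length) x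

def seg (ξ : ℕ → X) (n k : ℕ) : List X := (List.range k).map fun i => ξ (n + i)

lemma run_succ (δ : Q → X → Q) (s : Q) (ξ : ℕ → X) (n : ℕ) :
    run δ s ξ (n + 1) = δ (run δ s ξ n) (ξ n) := rfl

lemma run_zero (δ : Q → X → Q) (s : Q) (ξ : ℕ → X) : run δ s ξ 0 = s := rfl

lemma run_seg (δ : Q → X → Q) (s : Q) (ξ : ℕ → X) (n k : ℕ) :
    run δ s ξ (n + k) = (seg ξ n k).foldl δ (run δ s ξ n) := by
  induction k with
  | zero => simp [seg]
  | succ k ih =>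
      have : n + (k + 1) = (n + k) + 1 := rfl
      rw [this, run_succ, ih]
      simp [seg, List.range_succ]

lemma run_prefix (δ : Q → X → Q) (s : Q) (w : List X) (ξ : ℕ → X) :
    ∀ n, n ≤ w.length → run δ s (wApp w ξ) n = (w.take n).foldl δ s := by
  intro n hn
  induction n with
  | zero => simp [run_zero]
  | succ n ih =>
      have hn' : n < w.length := hn
      rw [run_succ, ih (le_of_lt hn')]
      have hx : wApp w ξ n = w.getD n (ξ 0) := by simp [wApp, hn']
      rw [hx]
      rw [List.take_succ]
      rw [List.foldl_append]
      simp [List.getElem?_eq_getElem hn', List.getD_eq_getElem _ _ hn']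

lemma run_shift (δ : Q → X → Q) (s : Q) (w : List X) (ξ : ℕ → X) (m : ℕ) :
    run δ s (wApp w ξ) (w.length + m) = run δ (w.foldl δ s) ξ m := by
  induction m with
  | zero =>
      have := run_prefix δ s w ξ w.length le_rfl
      simpa [List.take_length, run_zero] using this
  | succ m ih =>
      have h1 : w.length + (m + 1) = (w.length + m) + 1 := rfl
      rw [h1, run_succ, run_succ, ih]
      congr 1
      simp [wApp]

lemma per_unfold (v : List X) (x : X) (hv : v ≠ []) :
    per v x = wApp v (per v x) := by
  have hl : 0 < v.length := List.length_pos_iff.mpr hv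
  funext n
  by_cases h : n < v.length
  · simp [per, wApp, h, Nat.mod_eq_of_lt h]
  · have h' : v.length ≤ n := le_of_not_gt h
    simp only [per, wApp, if_neg h]
    rw [Nat.mod_eq_sub_mod h']

lemma run_per (δ : Q → X → Q) (q : Q) (v : List X) (x : X) (hv : v ≠ [])
    (hloop : v.foldl δ q = q) (k j : ℕ) :
    run δ q (per v x) (k * v.length + j) = run δ q (per v x) j := by
  induction k with
  | zero => simp
  | succ k ih =>
      have h1 : (k + 1) * v.length + j = v.length + (k * v.length + j) := by ring
      rw [h1]
      conv_lhs => rw [per_unfold v x hv]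
      rw [run_shift, hloop, ih]

lemma seg_foldl (δ : Q → X → Q) (s : Q) (ξ : ℕ → X) {n m : ℕ} (h : n ≤ m) :
    (seg ξ n (m - n)).foldl δ (run δ s ξ n) = run δ s ξ m := by
  have := run_seg δ s ξ n (m - n)
  rw [Nat.add_sub_cancel' h] at this
  exact this.symm

lemma reach_of_infOcc {δ : Q → X → Q} {init : Q} {ξ : ℕ → X} {q r : Q}
    (hq : q ∈ infOcc δ init ξ) (hr : r ∈ infOcc δ init ξ) :
    ∃ w : List X, w.foldl δ q = r := by
  obtain ⟨n, -, hn⟩ := hq 0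
  obtain ⟨m, hm, hm'⟩ := hr n
  refine ⟨seg ξ n (m - n), ?_⟩
  have h := seg_foldl δ init ξ hm
  rw [hn] at h
  rw [h, hm']

lemma loop_of_infOcc {δ : Q → X → Q} {init : Q} {ξ : ℕ → X} {q : Q}
    (hq : q ∈ infOcc δ init ξ) :
    ∃ w : List X, w ≠ [] ∧ w.foldl δ q = q := by
  obtain ⟨n, -, hn⟩ := hq 0
  obtain ⟨m, hm, hm'⟩ := hq (n + 1)
  have hnm : n ≤ m := le_trans (Nat.le_succ n) hm
  refine ⟨seg ξ n (m - n), ?_, ?_⟩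
  · have hlen : (seg ξ n (m - n)).length = m - n := by simp [seg]
    intro hcon
    rw [hcon] at hlen
    simp at hlen
    omega
  · have h := seg_foldl δ init ξ hnm
    rw [hn] at h
    rw [h, hm']

lemma reach_init_of_infOcc {δ : Q → X → Q} {init : Q} {ξ : ℕ → X} {q : Q}
    (hq : q ∈ infOcc δ init ξ) :
    ∃ w : List X, w.foldl δ init = q := by
  obtain ⟨n, -, hn⟩ := hq 0
  exact ⟨seg ξ 0 n, by
    have := seg_foldl δ init ξ (Nat.zero_le n)
    simpa [run_zero, hn] using this⟩

lemma infOcc_nonempty [Finite Q] (δ : Q → X → Q) (init : Q) (ξ : ℕ → X) :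
    (infOcc δ init ξ).Nonempty := by
  obtain ⟨q, hq⟩ := Finite.exists_infinite_fiber (run δ init ξ)
  rw [Set.infinite_coe_iff] at hq
  refine ⟨q, fun N => ?_⟩
  obtain ⟨n, hn, hn'⟩ := hq.exists_gt N
  exact ⟨n, le_of_lt hn', hn⟩

lemma tour (δ : Q → X → Q) (q : Q) :
    ∀ l : List Q, (∀ s ∈ l, (∃ w : List X, w.foldl δ q = s) ∧ ∃ w : List X, w.foldl δ s = q) →
    ∃ v : List X, v.foldl δ q = q ∧ ∀ s ∈ l, ∃ j ≤ v.length, (v.take j).foldl δ q = s := by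
  intro l
  induction l with
  | nil => exact fun _ => ⟨[], rfl, by simp⟩
  | cons s l ih =>
      intro h
      obtain ⟨⟨w1, hw1⟩, ⟨w2, hw2⟩⟩ := h s List.mem_cons_self
      obtain ⟨v, hv, hvl⟩ := ih fun t ht => h t (List.mem_cons_of_mem s ht)
      refine ⟨(w1 ++ w2) ++ v, by simp [List.foldl_append, hw1, hw2, hv], ?_⟩
      intro t ht
      rcases List.mem_cons.mp ht with rfl | ht
      · refine ⟨w1.length, by simp only [List.length_append]; omega, ?_⟩
        rw [List.append_assoc, List.take_left, hw1]
      · obtain ⟨j, hj, hjf⟩ := hvl t ht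
        refine ⟨(w1 ++ w2).length + j, by simp only [List.length_append]; omega, ?_⟩
        rw [List.take_length_add_append, List.foldl_append, List.foldl_append, hw1, hw2, hjf]

end Aux

/-- On the cycles of a finite automaton, `(C_ℳ; ≤₀, ≤₁)` is a compatible 2-preorder:
both relations are preorders, `≤₁` refines `≡₀`, and `≡₀`-equivalent cycles have a
common `≤₁`-lower bound in `C_ℳ`. -/
theorem stmt14 {X Q : Type*} [Finite Q] (δ : Q → X → Q) (init : Q) :
    (∀ c ∈ cycles δ init, cle0 δ c c) ∧
    (∀ c ∈ cycles δ init, ∀ d ∈ cycles δ init, ∀ e ∈ cycles δ init,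
        cle0 δ c d → cle0 δ d e → cle0 δ c e) ∧
    (∀ c ∈ cycles δ init, cle1 c c) ∧
    (∀ c ∈ cycles δ init, ∀ d ∈ cycles δ init, ∀ e ∈ cycles δ init,
        cle1 c d → cle1 d e → cle1 c e) ∧
    (∀ c ∈ cycles δ init, ∀ d ∈ cycles δ init,
        cle1 c d → cle0 δ c d ∧ cle0 δ d c) ∧
    (∀ c ∈ cycles δ init, ∀ d ∈ cycles δ init, cle0 δ c d → cle0 δ d c →
        ∃ e ∈ cycles δ init, cle1 e c ∧ cle1 e d) := by
  refine ⟨?_, ?_, ?_, ?_, ?_, ?_⟩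
  · rintro c ⟨ξ, rfl⟩
    obtain ⟨q, hq⟩ := infOcc_nonempty δ init ξ
    exact ⟨q, hq, q, hq, [], rfl⟩
  · rintro c - d hd e - ⟨q, hq, r, hr, w1, hw1⟩ ⟨q', hq', r', hr', w3, hw3⟩
    obtain ⟨ξd, rfl⟩ := hd
    obtain ⟨w2, hw2⟩ := reach_of_infOcc hr hq'
    exact ⟨q, hq, r', hr', w1 ++ w2 ++ w3,
      by simp [List.foldl_append, hw1, hw2, hw3]⟩
  · exact fun c _ x hx => hx
  · exact fun c _ d _ e _ h1 h2 x hx => h1 (h2 hx)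
  · rintro c - d ⟨ξd, rfl⟩ h
    obtain ⟨r, hr⟩ := infOcc_nonempty δ init ξd
    exact ⟨⟨r, h hr, r, hr, [], rfl⟩, ⟨r, hr, r, h hr, [], rfl⟩⟩
  · rintro c hc d hd ⟨q1, hq1, r1, hr1, w1, hw1⟩ ⟨q2, hq2, r2, hr2, w2, hw2⟩
    obtain ⟨ξc, rfl⟩ := hc
    obtain ⟨ξd, rfl⟩ := hd
    obtain ⟨q₀, hq₀⟩ := infOcc_nonempty δ init ξc
    have hto : ∀ s ∈ infOcc δ init ξc ∪ infOcc δ init ξd,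
        (∃ w : List X, w.foldl δ q₀ = s) ∧ ∃ w : List X, w.foldl δ s = q₀ := by
      intro s hs
      rcases hs with hs | hs
      · exact ⟨reach_of_infOcc hq₀ hs, reach_of_infOcc hs hq₀⟩
      · constructor
        · obtain ⟨wa, hwa⟩ := reach_of_infOcc hq₀ hq1
          obtain ⟨wb, hwb⟩ := reach_of_infOcc hr1 hs
          exact ⟨wa ++ w1 ++ wb, by simp [List.foldl_append, hwa, hw1, hwb]⟩
        · obtain ⟨wa, hwa⟩ := reach_of_infOcc hs hq2
          obtain ⟨wb, hwb⟩ := reach_of_infOcc hr2 hq₀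
          exact ⟨wa ++ w2 ++ wb, by simp [List.foldl_append, hwa, hw2, hwb]⟩
    have hfin : (infOcc δ init ξc ∪ infOcc δ init ξd).Finite := Set.toFinite _
    have hmem : ∀ s, s ∈ hfin.toFinset.toList ↔
        s ∈ infOcc δ init ξc ∪ infOcc δ init ξd := by
      intro s; rw [Finset.mem_toList, Set.Finite.mem_toFinset]
    obtain ⟨v₀, hv₀, hv₀l⟩ := tour δ q₀ hfin.toFinset.toList
      (fun s hs => hto s ((hmem s).mp hs))
    obtain ⟨w₀, hw₀ne, hw₀⟩ := loop_of_infOcc hq₀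
    have hvne : v₀ ++ w₀ ≠ [] := by simp [hw₀ne]
    have hloop : (v₀ ++ w₀).foldl δ q₀ = q₀ := by
      simp [List.foldl_append, hv₀, hw₀]
    obtain ⟨u, hu⟩ := reach_init_of_infOcc hq₀
    set ξ : ℕ → X := wApp u (per (v₀ ++ w₀) (ξc 0)) with hξ
    have hsub : infOcc δ init ξc ∪ infOcc δ init ξd ⊆ infOcc δ init ξ := by
      intro s hs N
      obtain ⟨j, hj, hjf⟩ := hv₀l s ((hmem s).mpr hs)
      have h1 : 1 ≤ (v₀ ++ w₀).length := List.length_pos_iff.mpr hvne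
      refine ⟨u.length + (N * (v₀ ++ w₀).length + j), ?_, ?_⟩
      · have h2 : N * 1 ≤ N * (v₀ ++ w₀).length := Nat.mul_le_mul_left N h1
        omega
      · have h2 : run δ init ξ (u.length + (N * (v₀ ++ w₀).length + j)) =
            run δ q₀ (per (v₀ ++ w₀) (ξc 0)) (N * (v₀ ++ w₀).length + j) := by
          rw [hξ, run_shift, hu]
        rw [h2, run_per δ q₀ _ _ hvne hloop]
        have hjv : j ≤ (v₀ ++ w₀).length := by
          rw [List.length_append]; omega
        have h3 : run δ q₀ (per (v₀ ++ w₀) (ξc 0)) j =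
            ((v₀ ++ w₀).take j).foldl δ q₀ := by
          conv_lhs => rw [per_unfold _ _ hvne]
          exact run_prefix δ q₀ _ _ j hjv
        rw [h3, List.take_append_of_le_length hj, hjf]
    exact ⟨infOcc δ init ξ, ⟨ξ, rfl⟩,
      fun x hx => hsub (Or.inl hx), fun x hx => hsub (Or.inr hx)⟩
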